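/- For every real p > 1, every real n ≥ 1, and every x ∈ ℝ, one has χ_n(x)^(p/(p−1)) ≤ (2p(2p−1))^(p/(p−1)) · φ_n(x). -/

import Mathlib

/-- The quadratic-growth approximation `φ_n(x)` of `|x|^{2p}` (Lemma 4.1):
`φ_n(x) = (x²)^p` if `x² ≤ n`, and `φ_n(x) = n^p + p n^(p−1)(x² − n)` otherwise.
Powers are real powers (rpow). -/
noncomputable def phiN (p n x : ℝ) : ℝ :=
  if x ^ 2 ≤ n then (x ^ 2) ^ p else n ^ p + p * n ^ (p - 1) * (x ^ 2 - n)

/-- The derivative `ψ_n` of `φ_n` (Lemma 4.1):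
`ψ_n(x) = 2p x (x²)^(p−1)` if `x² ≤ n`, and `ψ_n(x) = 2p n^(p−1) x` otherwise. -/
noncomputable def psiN (p n x : ℝ) : ℝ :=
  if x ^ 2 ≤ n then 2 * p * x * (x ^ 2) ^ (p - 1) else 2 * p * n ^ (p - 1) * x

/-- The a.e. second derivative `χ_n` of `φ_n` (Lemma 4.1):
`χ_n(x) = 2p(2p−1)(x²)^(p−1)` if `x² ≤ n`, and `χ_n(x) = 2p n^(p−1)` otherwise. -/
noncomputable def chiN (p n x : ℝ) : ℝ :=
  if x ^ 2 ≤ n then 2 * p * (2 * p - 1) * (x ^ 2) ^ (p - 1) else 2 * p * n ^ (p - 1)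

/-- For every real `p > 1`, `n ≥ 1`, and every `x ∈ ℝ`,
`χ_n(x)^(p/(p−1)) ≤ (2p(2p−1))^(p/(p−1)) · φ_n(x)`. -/
theorem chiN_rpow_le (p n : ℝ) (hp : 1 < p) (hn : 1 ≤ n) (x : ℝ) :
    chiN p n x ^ (p / (p - 1)) ≤ (2 * p * (2 * p - 1)) ^ (p / (p - 1)) * phiN p n x := by
  have hp1 : (0:ℝ) < p - 1 := by linarith
  have hq : 0 < p / (p - 1) := by positivity
  set q := p / (p - 1) with hqdef
  have hpq : (p - 1) * q = p := by rw [hqdef]; field_simp [hp1.ne']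
  unfold chiN phiN
  split_ifs with h
  · have hx2 : (0:ℝ) ≤ x ^ 2 := sq_nonneg x
    have key : (2 * p * (2 * p - 1) * (x ^ 2) ^ (p - 1)) ^ q
        = (2 * p * (2 * p - 1)) ^ q * (x ^ 2) ^ p := by
      rw [Real.mul_rpow (by nlinarith) (Real.rpow_nonneg hx2 _),
        ← Real.rpow_mul hx2, hpq]
    rw [key]
  · have hn0 : (0:ℝ) < n := by linarith
    have key : (2 * p * n ^ (p - 1)) ^ q = (2 * p) ^ q * n ^ p := by
      rw [Real.mul_rpow (by linarith) (Real.rpow_nonneg hn0.le _),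
        ← Real.rpow_mul hn0.le, hpq]
    have h1 : (2 * p * (2 * p - 1)) ^ q = (2 * p) ^ q * (2 * p - 1) ^ q :=
      Real.mul_rpow (by linarith) (by linarith)
    rw [key, h1]
    have h2 : (1:ℝ) ≤ (2 * p - 1) ^ q := Real.one_le_rpow (by linarith) hq.le
    have h3 : (0:ℝ) ≤ p * n ^ (p - 1) * (x ^ 2 - n) :=
      mul_nonneg (mul_nonneg (by linarith) (Real.rpow_nonneg hn0.le _))
        (by linarith [not_le.mp h])
    have h4 : (0:ℝ) ≤ (2 * p) ^ q := Real.rpow_nonneg (by linarith) _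
    have h5 : (0:ℝ) ≤ n ^ p := Real.rpow_nonneg hn0.le _
    nlinarith [mul_le_mul_of_nonneg_left h2 h4]
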